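/- For every integer n with n ≡ 5 (mod 9), one has F(n) ≢ 5 (mod 9). That is, numbers congruent to 5 (mod 9) never appear consecutively in an F-trajectory. -/
import Mathlib

/-- The Collatz function. -/
def T (n : ℤ) : ℤ := if n % 2 = 0 then n / 2 else (3 * n + 1) / 2

/-- The map `F`, defined on integers congruent to 2 (mod 3):
`F n = T n` if `n ≡ 5 (mod 6)` and `F n = T (T n)` if `n ≡ 2 (mod 6)`. -/
def F (n : ℤ) : ℤ := if n % 6 = 5 then T n else T (T n)

theorem stmt_16 (n : ℤ) (hn : n % 9 = 5) : F n % 9 ≠ 5 := by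
  unfold F T
  split_ifs <;> omega
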